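/- arXiv:1608.06691 — 2 statements merged into one kernel-verified Lean document; each statement's English description precedes it below -/
import Mathlib

section
/- (Expression substitution preserves highest-order-derivative bounds) Let v = (v_1,…,v_n) be a vector of functions with v_l ≢ 0, let c̄ ∈ ℤ and offsets d_j satisfy: ν_{x_j}(v) < d_j - c̄ for j ∈ S and ν_{x_j}(v) ≤ d_j - c̄ otherwise, and d_j - c̄ ≥ 0 for j ∈ S (where S ⊇ {l, r}). Define ω₁ = y_r + (v_r/v_l)·x_l^{(d_l - c̄)}, where y_r is a new variable. Then ν_{x_j}(ω₁) < d_j - c̄ for j ∈ S \ {l}, ν_{x_l}(ω₁) = d_l - c̄, and ν_{x_j}(ω₁) ≤ d_j - c̄ for j ∉ S. -/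
open MvPolynomial

/-- Formal variables for the expression substitution (ES) setting: `t`
(= `none`), the derivatives `x_j^{(k)}` (= `some (.inl (j, k))`), and the
derivatives `y_r^{(k)}` of the newly introduced variables
(= `some (.inr (r, k))`). -/
abbrev EVar (n : ℕ) := Option ((Fin n × ℕ) ⊕ (Fin n × ℕ))

/-- Differential polynomials in these variables, with real coefficients. -/
abbrev EPoly (n : ℕ) := MvPolynomial (EVar n) ℝ

/-- The variable `x_j^{(k)}`. -/
noncomputable def Xv {n : ℕ} (j : Fin n) (k : ℕ) : EPoly n := X (some (Sum.inl (j, k)))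

/-- The variable `y_r^{(k)}`. -/
noncomputable def Yv {n : ℕ} (r : Fin n) (k : ℕ) : EPoly n := X (some (Sum.inr (r, k)))

/-- The total time derivative operator `D`, acting by the chain rule. -/
noncomputable def Dop {n : ℕ} : EPoly n → EPoly n :=
  MvPolynomial.mkDerivation ℝ fun v : EVar n =>
    match v with
    | none => (1 : EPoly n)
    | some (Sum.inl (j, k)) => Xv j (k + 1)
    | some (Sum.inr (r, k)) => Yv r (k + 1)

/-- `hodX w j`: highest order of a derivative of `x_j` occurring in `w`
(`⊥` = `-∞` if absent). -/
noncomputable def hodX {n : ℕ} (w : EPoly n) (j : Fin n) : WithBot ℤ :=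
  w.vars.sup fun v =>
    match v with
    | some (Sum.inl (j', k)) => if j' = j then ((k : ℤ) : WithBot ℤ) else ⊥
    | _ => ⊥

/-- `hodY w r`: highest order of a derivative of `y_r` occurring in `w`. -/
noncomputable def hodY {n : ℕ} (w : EPoly n) (r : Fin n) : WithBot ℤ :=
  w.vars.sup fun v =>
    match v with
    | some (Sum.inr (r', k)) => if r' = r then ((k : ℤ) : WithBot ℤ) else ⊥
    | _ => ⊥


noncomputable def phiAux {σ : Type*} [DecidableEq σ] (s : σ) :
    MvPolynomial σ ℝ →ₐ[ℝ] Polynomial (MvPolynomial {t : σ // t ≠ s} ℝ) :=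
  aeval fun t => if h : t = s then Polynomial.X else Polynomial.C (X ⟨t, h⟩)

noncomputable def psiAux {σ : Type*} [DecidableEq σ] (s : σ) :
    Polynomial (MvPolynomial {t : σ // t ≠ s} ℝ) →+* MvPolynomial σ ℝ :=
  Polynomial.eval₂RingHom (rename (Subtype.val) : MvPolynomial {t : σ // t ≠ s} ℝ →ₐ[ℝ] MvPolynomial σ ℝ).toRingHom (X s)

lemma psi_phi {σ : Type*} [DecidableEq σ] (s : σ) (f : MvPolynomial σ ℝ) :
    psiAux s (phiAux s f) = f := by
  have : (psiAux s).comp (phiAux s : MvPolynomial σ ℝ →+* _) = RingHom.id _ := by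
    apply MvPolynomial.ringHom_ext
    · intro r
      simp [phiAux, psiAux]
    · intro t
      by_cases h : t = s
      · subst h; simp [phiAux, psiAux]
      · simp [phiAux, psiAux, h]
  exact congrArg (fun g => g f) this

lemma phi_inj {σ : Type*} [DecidableEq σ] (s : σ) :
    Function.Injective (phiAux s) := by
  intro a b h
  have := congrArg (psiAux s) h
  simpa [psi_phi] using this

lemma natDegree_phi_eq_zero {σ : Type*} [DecidableEq σ] {s : σ} {f : MvPolynomial σ ℝ}
    (hs : s ∉ f.vars) : (phiAux s f).natDegree = 0 := by
  have hf : f ∈ supported ℝ ({s}ᶜ : Set σ) := by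
    rw [mem_supported]
    intro t ht
    simp only [Set.mem_compl_iff, Set.mem_singleton_iff]
    rintro rfl
    exact hs (by exact_mod_cast ht)
  rw [supported_eq_adjoin_X] at hf
  refine Algebra.adjoin_induction (p := fun g _ => (phiAux s g).natDegree = 0) ?_ ?_ ?_ ?_ hf
  · rintro _ ⟨t, ht, rfl⟩
    have hts : t ≠ s := ht
    simp [phiAux, hts]
  · intro r; simp [phiAux]
  · intro x y _ _ hx hy
    rw [map_add]
    have := Polynomial.natDegree_add_le (phiAux s x) (phiAux s y)
    omega
  · intro x y _ _ hx hy
    rw [map_mul]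
    have := Polynomial.natDegree_mul_le (p := phiAux s x) (q := phiAux s y)
    omega

lemma not_mem_vars_of_natDegree_zero {σ : Type*} [DecidableEq σ] {s : σ} {f : MvPolynomial σ ℝ}
    (h : (phiAux s f).natDegree = 0) : s ∉ f.vars := by
  obtain ⟨c, hc⟩ := Polynomial.natDegree_eq_zero.mp h
  have hf : f = rename (Subtype.val) c := by
    have := psi_phi s f
    rw [← hc] at this
    simpa [psiAux] using this.symm
  intro hs
  rw [hf] at hs
  obtain ⟨t, _, ht⟩ := Finset.mem_image.mp (vars_rename _ _ hs)
  exact t.2 ht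

lemma vars_subset_vars_mul {σ : Type*} [DecidableEq σ] (p q : MvPolynomial σ ℝ)
    (hq : q ≠ 0) : p.vars ⊆ (p * q).vars := by
  intro s hs
  have hp : p ≠ 0 := by rintro rfl; simp [vars_0] at hs
  by_contra hns
  have h0 : (phiAux s (p * q)).natDegree = 0 := natDegree_phi_eq_zero hns
  rw [map_mul] at h0
  have hp' : phiAux s p ≠ 0 := fun h => hp (phi_inj s (by simpa using h))
  have hq' : phiAux s q ≠ 0 := fun h => hq (phi_inj s (by simpa using h))
  rw [Polynomial.natDegree_mul hp' hq'] at h0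
  exact not_mem_vars_of_natDegree_zero (by omega) hs


noncomputable def Fx {n : ℕ} (j : Fin n) : EVar n → WithBot ℤ := fun v =>
  match v with
  | some (Sum.inl (j', k)) => if j' = j then ((k : ℤ) : WithBot ℤ) else ⊥
  | _ => ⊥

lemma hodX_eq {n : ℕ} (w : EPoly n) (j : Fin n) : hodX w j = w.vars.sup (Fx j) := rfl

lemma hodX_mono {n : ℕ} {a b : EPoly n} (h : a.vars ⊆ b.vars) (j : Fin n) :
    hodX a j ≤ hodX b j := by
  rw [hodX_eq, hodX_eq]
  exact Finset.sup_mono h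

lemma le_hodY {n : ℕ} (w : EPoly n) (r' : Fin n) (k : ℕ)
    (h : (some (Sum.inr (r', k)) : EVar n) ∈ w.vars) :
    ((k : ℤ) : WithBot ℤ) ≤ hodY w r' := by
  unfold hodY
  have := Finset.le_sup (f := fun v : EVar n =>
    match v with
    | some (Sum.inr (r'', k')) => if r'' = r' then ((k' : ℤ) : WithBot ℤ) else ⊥
    | _ => ⊥) h
  simpa using this



/-- **ES lemma (Lemma on `ω₁`).** Let `v` be a kernel-type vector with
support `S = {j : v j ≠ 0}`, `l, r ∈ S` with `r ≠ l`, let `w` denote the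
quotient `v_r/v_l` (i.e. `v l * w = v r`), and assume the ES conditions:
`ν_{x_j}(v) < d j - c̄` for `j ∈ S`, `ν_{x_j}(v) ≤ d j - c̄` otherwise, and
`d j - c̄ ≥ 0` for `j ∈ S`. Then `ω₁ = y_r + (v_r/v_l)·x_l^{(d_l - c̄)}`
satisfies `ν_{x_j}(ω₁) < d j - c̄` for `j ∈ S \ {l}`,
`ν_{x_l}(ω₁) = d l - c̄`, and `ν_{x_j}(ω₁) ≤ d j - c̄` for `j ∉ S`. -/
theorem stmt10 {n : ℕ} (v : Fin n → EPoly n) (w : EPoly n) (d : Fin n → ℤ) (cb : ℤ)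
    (l r : Fin n) (hvl : v l ≠ 0) (hvr : v r ≠ 0) (hrl : r ≠ l)
    (hw : v l * w = v r)
    (hvY : ∀ i r', hodY (v i) r' = ⊥)
    (hES1 : ∀ i j, v j ≠ 0 → hodX (v i) j < ((d j - cb : ℤ) : WithBot ℤ))
    (hES2 : ∀ i j, v j = 0 → hodX (v i) j ≤ ((d j - cb : ℤ) : WithBot ℤ))
    (hES3 : ∀ j, v j ≠ 0 → cb ≤ d j) :
    (∀ j, v j ≠ 0 → j ≠ l →
      hodX (Yv r 0 + w * Xv l (d l - cb).toNat) j < ((d j - cb : ℤ) : WithBot ℤ)) ∧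
    hodX (Yv r 0 + w * Xv l (d l - cb).toNat) l = ((d l - cb : ℤ) : WithBot ℤ) ∧
    (∀ j, v j = 0 →
      hodX (Yv r 0 + w * Xv l (d l - cb).toNat) j ≤ ((d j - cb : ℤ) : WithBot ℤ)) := by
  classical
  have hml : ((d l - cb).toNat : ℤ) = d l - cb :=
    Int.toNat_of_nonneg (by linarith [hES3 l hvl])
  set m := (d l - cb).toNat with hmdef
  have hw0 : w ≠ 0 := by rintro rfl; rw [mul_zero] at hw; exact hvr hw.symm
  have hsubw : w.vars ⊆ (v r).vars := by
    rw [← hw]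
    intro s hs
    have := vars_subset_vars_mul w (v l) hvl hs
    rwa [mul_comm] at this
  have hnoYw : ∀ (r' : Fin n) (k : ℕ), (some (Sum.inr (r', k)) : EVar n) ∉ w.vars := by
    intro r' k hk
    have h1 := le_hodY (v r) r' k (hsubw hk)
    rw [hvY r r'] at h1
    simp at h1
  have hXne : (Xv l m : EPoly n) ≠ 0 := by unfold Xv; exact X_ne_zero _
  have hvXl : (Xv l m).vars = {(some (Sum.inl (l, m)) : EVar n)} := by unfold Xv; exact vars_X
  have hprod : (w * Xv l m).vars = w.vars ∪ {(some (Sum.inl (l, m)) : EVar n)} := by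
    apply Finset.Subset.antisymm
    · exact (vars_mul _ _).trans (by rw [hvXl])
    · apply Finset.union_subset
      · exact vars_subset_vars_mul w _ hXne
      · rw [← hvXl]
        intro s hs
        have := vars_subset_vars_mul (Xv l m) w hw0 hs
        rwa [mul_comm] at this
  have hvY0 : (Yv r 0).vars = {(some (Sum.inr (r, 0)) : EVar n)} := by unfold Yv; exact vars_X
  have hdisj : Disjoint (Yv r 0).vars (w * Xv l m).vars := by
    rw [hvY0, hprod, Finset.disjoint_left]
    intro a ha hb
    rw [Finset.mem_singleton] at ha
    subst ha
    rcases Finset.mem_union.mp hb with h | h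
    · exact hnoYw r 0 h
    · simp at h
  have hvarsum : (Yv r 0 + w * Xv l m).vars
      = {(some (Sum.inr (r, 0)) : EVar n)} ∪ (w.vars ∪ {(some (Sum.inl (l, m)) : EVar n)}) := by
    rw [vars_add_of_disjoint hdisj, hvY0, hprod]
  have hsup : ∀ j : Fin n, hodX (Yv r 0 + w * Xv l m) j
      = hodX w j ⊔ Fx j (some (Sum.inl (l, m))) := by
    intro j
    rw [hodX_eq, hvarsum, Finset.sup_union, Finset.sup_union, Finset.sup_singleton,
      Finset.sup_singleton, ← hodX_eq]
    have hb : Fx j (some (Sum.inr (r, 0))) = ⊥ := rfl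
    rw [hb, bot_sup_eq]
  refine ⟨?_, ?_, ?_⟩
  · intro j hj hjl
    rw [hsup j]
    have h1 : hodX w j < ((d j - cb : ℤ) : WithBot ℤ) :=
      lt_of_le_of_lt (hodX_mono hsubw j) (hES1 r j hj)
    have hne : ¬ (l = j) := fun h => hjl h.symm
    have h2 : Fx j (some (Sum.inl (l, m))) = ⊥ := by simp [Fx, hne]
    rw [h2, sup_bot_eq]
    exact h1
  · rw [hsup l]
    have h2 : Fx l (some (Sum.inl (l, m))) = ((d l - cb : ℤ) : WithBot ℤ) := by
      show (if l = l then ((m : ℤ) : WithBot ℤ) else ⊥) = _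
      rw [if_pos rfl, hml]
    rw [h2]
    have h1 : hodX w l < ((d l - cb : ℤ) : WithBot ℤ) :=
      lt_of_le_of_lt (hodX_mono hsubw l) (hES1 r l hvl)
    exact sup_eq_right.mpr h1.le
  · intro j hj
    rw [hsup j]
    have hne : ¬ (l = j) := by rintro rfl; exact hvl hj
    have h2 : Fx j (some (Sum.inl (l, m))) = ⊥ := by simp [Fx, hne]
    rw [h2, sup_bot_eq]
    exact le_trans (hodX_mono hsubw j) (hES2 r j hj)
end

section
/- Let J be the n×n System Jacobian of a DAE with valid offsets (c;d) and let v ∈ ker J with v_l ≢ 0. Suppose for r ∈ S\{l} the substitution identity x_r^{(d_r - c̄)} = y_r + (v_r/v_l)·x_l^{(d_l - c̄)} holds, with c̄ ≥ c_i. Then by Griewank's Lemma, ∂x_r^{(d_r - c_i)}/∂x_l^{(d_l - c_i)} = v_r/v_l, and consequently the substituted equation f̄_i satisfies ∂f̄_i/∂x_l^{(d_l - c_i)} = J_{il} + Σ_{r∈S\{l}} J_{ir}·(v_r/v_l) = (1/v_l)·(J v)_i = 0. -/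
open MvPolynomial

/-- The System Jacobian: `J i j = ∂f_i/∂x_j^{(d_j - c_i)}` (zero when
`d j - c i < 0` or when `d j - c i` exceeds the signature entry). -/
noncomputable def sysJacE {n : ℕ} (f : Fin n → EPoly n) (c d : Fin n → ℕ) :
    Matrix (Fin n) (Fin n) (EPoly n) :=
  fun i j => if c i ≤ d j then pderiv (some (Sum.inl (j, d j - c i))) (f i) else 0

open scoped Classical in
/-- The ES substitution for equation `i`: each variable `x_r^{(d_r - c_i)}`
with `r ∈ S \ {l}` is replaced by
`(y_r + (v_r/v_l)·x_l^{(d_l - c̄)})^{(c̄ - c_i)}`, where `w r` denotes the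
quotient `v_r/v_l`; all other variables are left unchanged. -/
noncomputable def substMap {n : ℕ} (v w : Fin n → EPoly n) (c d : Fin n → ℕ)
    (cb : ℕ) (l i : Fin n) : EVar n → EPoly n :=
  fun var =>
    match var with
    | some (Sum.inl (r, k)) =>
        if v r ≠ 0 ∧ r ≠ l ∧ k = d r - c i then
          Dop^[cb - c i] (Yv r 0 + w r * Xv l (d l - cb))
        else X var
    | _ => X var

section Aux
variable {n : ℕ}

/-- The derivative-shift values used by `Dop`. -/
noncomputable def dopVals (n : ℕ) : EVar n → EPoly n := fun v =>
  match v with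
  | none => (1 : EPoly n)
  | some (Sum.inl (j, k)) => Xv j (k + 1)
  | some (Sum.inr (r, k)) => Yv r (k + 1)

/-- `Dop` as a bundled derivation. -/
noncomputable def DopD (n : ℕ) : Derivation ℝ (EPoly n) (EPoly n) :=
  MvPolynomial.mkDerivation ℝ (dopVals n)

lemma Dop_eq : (Dop : EPoly n → EPoly n) = ⇑(DopD n) := rfl

/-- Commutator of `pderiv u` and `Dop`, as a derivation. -/
noncomputable def commD (u : EVar n) : Derivation ℝ (EPoly n) (EPoly n) where
  toLinearMap := ((pderiv u).toLinearMap ∘ₗ (DopD n).toLinearMap)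
    - ((DopD n).toLinearMap ∘ₗ (pderiv u).toLinearMap)
  map_one_eq_zero' := by simp
  leibniz' a b := by
    simp only [LinearMap.sub_apply, LinearMap.comp_apply, smul_eq_mul, smul_sub]
    rw [show (DopD n).toLinearMap (a * b) = a • (DopD n) b + b • (DopD n) a from
        Derivation.leibniz _ _ _,
      show (pderiv u).toLinearMap (a * b) = a • (pderiv u) b + b • (pderiv u) a from
        Derivation.leibniz _ _ _]
    simp only [smul_eq_mul, map_add]
    rw [show ((pderiv u).toLinearMap) (a * DopD n b) = (pderiv u) (a * DopD n b) from rfl,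
      show ((pderiv u).toLinearMap) (b * DopD n a) = (pderiv u) (b * DopD n a) from rfl,
      show ((DopD n).toLinearMap) (a * (pderiv u) b) = (DopD n) (a * (pderiv u) b) from rfl,
      show ((DopD n).toLinearMap) (b * (pderiv u) a) = (DopD n) (b * (pderiv u) a) from rfl,
      Derivation.leibniz, Derivation.leibniz, Derivation.leibniz, Derivation.leibniz]
    simp only [smul_eq_mul]
    ring_nf
    rfl

lemma commD_apply (u : EVar n) (p : EPoly n) :
    commD u p = pderiv u (Dop p) - Dop (pderiv u p) := rfl

lemma pderiv_Dop (l : Fin n) (k : ℕ) (p : EPoly n) :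
    pderiv (some (Sum.inl (l, k + 1))) (Dop p)
      = Dop (pderiv (some (Sum.inl (l, k + 1))) p)
        + pderiv (some (Sum.inl (l, k))) p := by
  have h : commD (some (Sum.inl (l, k + 1))) = pderiv (some (Sum.inl (l, k))) := by
    apply MvPolynomial.derivation_ext
    intro v
    have hD : ∀ v : EVar n, (DopD n) (X v) = dopVals n v := fun v =>
      MvPolynomial.mkDerivation_X _ _ _
    rw [commD_apply, Dop_eq, hD]
    rcases v with _ | (⟨j, k'⟩ | ⟨r, k'⟩)
    · simp only [dopVals]
      rw [pderiv_one, pderiv_X_of_ne (by simp), map_zero, sub_zero]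
      rw [pderiv_X_of_ne (by simp)]
    · simp only [dopVals, Xv]
      classical
      simp only [pderiv_X, Pi.single_apply]
      split_ifs with h1 h2 h3 h4 h5 <;>
        simp_all
    · simp only [dopVals, Yv]
      rw [pderiv_X_of_ne (by simp), pderiv_X_of_ne (by simp), pderiv_X_of_ne (by simp),
        map_zero, sub_zero]
  have h2 : pderiv (some (Sum.inl (l, k + 1))) (Dop p)
      - Dop (pderiv (some (Sum.inl (l, k + 1))) p) = pderiv (some (Sum.inl (l, k))) p := by
    rw [← commD_apply, h]
  exact sub_eq_iff_eq_add'.mp h2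
end Aux
section Aux2
variable {n : ℕ}

lemma Dop_zero : Dop (0 : EPoly n) = 0 := by rw [Dop_eq]; exact map_zero _

/-- `p` has ∂-order ≤ `k` in `x_j`. -/
def pordLE (p : EPoly n) (j : Fin n) (k : ℕ) : Prop :=
  ∀ k', k < k' → pderiv (some (Sum.inl (j, k'))) p = 0

lemma pordLE_Dop {p : EPoly n} {j : Fin n} {k : ℕ} (h : pordLE p j k) :
    pordLE (Dop p) j (k + 1) := by
  intro k' hk'
  obtain ⟨k'', rfl⟩ : ∃ k'', k' = k'' + 1 := ⟨k' - 1, by omega⟩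
  rw [pderiv_Dop, h _ (by omega), h _ (by omega), Dop_zero, zero_add]

lemma pordLE_iterate {p : EPoly n} {j : Fin n} {k : ℕ} (h : pordLE p j k) (m : ℕ) :
    pordLE (Dop^[m] p) j (k + m) := by
  induction m with
  | zero => simpa using h
  | succ m ih =>
    rw [Function.iterate_succ_apply', show k + (m + 1) = (k + m) + 1 from rfl]
    exact pordLE_Dop ih

lemma griewank (j : Fin n) (k : ℕ) (m : ℕ) (p : EPoly n) (hp : pordLE p j k) :
    pderiv (some (Sum.inl (j, k + m))) (Dop^[m] p)
      = pderiv (some (Sum.inl (j, k))) p := by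
  induction m with
  | zero => rfl
  | succ m ih =>
    rw [Function.iterate_succ_apply', show k + (m + 1) = (k + m) + 1 from rfl,
      pderiv_Dop, pordLE_iterate hp m _ (by omega), Dop_zero, zero_add, ih]

lemma le_hodX_of_mem {p : EPoly n} {j : Fin n} {k : ℕ}
    (h : (some (Sum.inl (j, k)) : EVar n) ∈ p.vars) :
    ((k : ℤ) : WithBot ℤ) ≤ hodX p j := by
  have := Finset.le_sup (f := fun v : EVar n =>
    (match v with
    | some (Sum.inl (j', k)) => if j' = j then ((k : ℤ) : WithBot ℤ) else ⊥
    | _ => (⊥ : WithBot ℤ))) h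
  simpa [hodX] using this

lemma pderiv_eq_zero_of_hodX_lt {p : EPoly n} {j : Fin n} {K : ℤ}
    (h : hodX p j < (K : WithBot ℤ)) {k : ℕ} (hk : K ≤ (k : ℤ)) :
    pderiv (some (Sum.inl (j, k))) p = 0 := by
  apply pderiv_eq_zero_of_notMem_vars
  intro hmem
  have h1 := le_hodX_of_mem hmem
  have h2 : ((k : ℤ) : WithBot ℤ) < (K : WithBot ℤ) := lt_of_le_of_lt h1 h
  rw [WithBot.coe_lt_coe] at h2
  omega
end Aux2
section Aux3
variable {n : ℕ}

lemma key1 (v w : Fin n → EPoly n) (d : Fin n → ℕ) (cb ci : ℕ) (l : Fin n)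
    (hvl : v l ≠ 0) (hw : ∀ j, v l * w j = v j)
    (hE : ∀ q, hodX (v q) l < (((d l : ℤ) - (cb : ℤ) : ℤ) : WithBot ℤ))
    (hcb : cb ≤ d l) (hci : ci ≤ cb) (r : Fin n) :
    v l * pderiv (some (Sum.inl (l, d l - ci)))
        (Dop^[cb - ci] (Yv r 0 + w r * Xv l (d l - cb))) = v r := by
  set k : ℕ := d l - cb with hk
  set m : ℕ := cb - ci with hm
  have hkm : d l - ci = k + m := by omega
  have hkZ : ((d l : ℤ) - (cb : ℤ)) = (k : ℤ) := by omega
  have hwr : ∀ k', k ≤ k' → pderiv (some (Sum.inl (l, k'))) (w r) = 0 := by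
    intro k' hk'
    have hv0 : ∀ q : Fin n, pderiv (some (Sum.inl (l, k'))) (v q) = 0 := fun q =>
      pderiv_eq_zero_of_hodX_lt (hkZ ▸ hE q) (by exact_mod_cast hk')
    have h0 : v l * pderiv (some (Sum.inl (l, k'))) (w r) = 0 := by
      have hc := congrArg (pderiv (some (Sum.inl (l, k')))) (hw r)
      rw [pderiv_mul, hv0 l, hv0 r, zero_mul, zero_add] at hc
      exact hc
    rcases mul_eq_zero.mp h0 with h | h
    · exact absurd h hvl
    · exact h
  have hpord : pordLE (Yv r 0 + w r * Xv l k) l k := by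
    intro k' hk'
    rw [map_add, pderiv_mul, Yv, Xv, pderiv_X_of_ne (by simp),
      pderiv_X_of_ne (by simp; omega), hwr k' (le_of_lt hk'), zero_mul, mul_zero,
      add_zero, add_zero]
  rw [hkm, griewank l k m _ hpord, map_add, pderiv_mul, Yv, Xv,
    pderiv_X_of_ne (by simp), pderiv_X_self, hwr k le_rfl, zero_mul, mul_one,
    zero_add, zero_add, hw r]
end Aux3
section Aux4
variable {n : ℕ}

lemma aeval_fix (g : EVar n → EPoly n) (p : EPoly n) (h : ∀ var ∈ p.vars, g var = X var) :
    MvPolynomial.aeval g p = p := by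
  calc MvPolynomial.aeval g p = MvPolynomial.aeval X p := by
        rw [aeval_def, aeval_def, ← coe_eval₂Hom, ← coe_eval₂Hom]
        exact eval₂Hom_congr' rfl (fun var hv _ => h var hv) rfl
    _ = p := by simp [aeval_X_left]

open scoped Classical in
lemma chainRule (g : EVar n → EPoly n) (T : Finset (EVar n))
    (hg : ∀ var ∉ T, g var = X var) (u : EVar n) (hu : u ∉ T) (p : EPoly n) :
    pderiv u (MvPolynomial.aeval g p) = MvPolynomial.aeval g (pderiv u p)
      + ∑ t ∈ T, MvPolynomial.aeval g (pderiv t p) * pderiv u (g t) := by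
  induction p using MvPolynomial.induction_on with
  | C a => simp
  | add p q hp hq =>
    simp only [map_add, hp, hq, Finset.sum_add_distrib, add_mul]
    ring
  | mul_X p v hp =>
    have hXv : ∀ t : EVar n, pderiv t (X v : EPoly n) = if v = t then 1 else 0 := by
      intro t; rw [pderiv_X]; simp [Pi.single_apply]
    have key : pderiv u (g v)
        = (if v = u then 1 else 0) + ∑ t ∈ T, (if v = t then 1 else 0) * pderiv u (g t) := by
      simp only [ite_mul, one_mul, zero_mul, Finset.sum_ite_eq]
      by_cases hv : v ∈ T
      · rw [if_pos hv, if_neg (by rintro rfl; exact hu hv), zero_add]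
      · rw [if_neg hv, hg v hv, hXv u, add_zero]
    have hL : pderiv u (MvPolynomial.aeval g (p * X v))
        = (MvPolynomial.aeval g (pderiv u p)
            + ∑ t ∈ T, MvPolynomial.aeval g (pderiv t p) * pderiv u (g t)) * g v
          + MvPolynomial.aeval g p * pderiv u (g v) := by
      rw [map_mul, aeval_X, pderiv_mul, hp]
    have hR1 : MvPolynomial.aeval g (pderiv u (p * X v))
        = MvPolynomial.aeval g (pderiv u p) * g v
          + MvPolynomial.aeval g p * (if v = u then 1 else 0) := by
      rw [pderiv_mul, hXv u, map_add, map_mul, aeval_X]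
      split_ifs <;> simp
    have hR2 : ∀ t ∈ T, MvPolynomial.aeval g (pderiv t (p * X v)) * pderiv u (g t)
        = MvPolynomial.aeval g (pderiv t p) * pderiv u (g t) * g v
          + MvPolynomial.aeval g p * ((if v = t then 1 else 0) * pderiv u (g t)) := by
      intro t _
      rw [pderiv_mul, hXv t, map_add, map_mul, aeval_X]
      split_ifs <;> simp <;> ring
    rw [hL, hR1, Finset.sum_congr rfl hR2, Finset.sum_add_distrib, ← Finset.sum_mul,
      ← Finset.mul_sum, key]
    ring
end Aux4


/-- **Kernel computation for the ES method.** Let `v ∈ ker J` with `v l ≠ 0`,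
`w j` the quotients `v_j/v_l`, and `c i ≤ c̄`. By Griewank's Lemma the
substituted expression satisfies
`∂x_r^{(d_r - c_i)}/∂x_l^{(d_l - c_i)} = v_r/v_l`, and consequently the
substituted equation `f̄_i` satisfies `∂f̄_i/∂x_l^{(d_l - c_i)} = 0`. -/
theorem stmt12 {n : ℕ} (f v w : Fin n → EPoly n) (c d : Fin n → ℕ) (cb : ℕ)
    (l : Fin n) (hvl : v l ≠ 0)
    (hw : ∀ j, v l * w j = v j)
    (hσ : ∀ i j, hodX (f i) j ≤ (((d j : ℤ) - (c i : ℤ) : ℤ) : WithBot ℤ))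
    (hfY : ∀ i r', hodY (f i) r' = ⊥)
    (hvY : ∀ i r', hodY (v i) r' = ⊥)
    (hES1 : ∀ i j, v j ≠ 0 → hodX (v i) j < (((d j : ℤ) - (cb : ℤ) : ℤ) : WithBot ℤ))
    (hES2 : ∀ i j, v j = 0 → hodX (v i) j ≤ (((d j : ℤ) - (cb : ℤ) : ℤ) : WithBot ℤ))
    (hES3 : ∀ j, v j ≠ 0 → cb ≤ d j)
    (i : Fin n) (hci : c i ≤ cb)
    (hker : ∑ j, sysJacE f c d i j * v j = 0) :
    (∀ r, v r ≠ 0 → r ≠ l →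
      v l * pderiv (some (Sum.inl (l, d l - c i)))
          (Dop^[cb - c i] (Yv r 0 + w r * Xv l (d l - cb))) = v r) ∧
    pderiv (some (Sum.inl (l, d l - c i)))
      (MvPolynomial.aeval (substMap v w c d cb l i) (f i)) = 0 := by

  classical
  have hdl : cb ≤ d l := hES3 l hvl
  have part1 : ∀ r, v r ≠ 0 →
      v l * pderiv (some (Sum.inl (l, d l - c i)))
        (Dop^[cb - c i] (Yv r 0 + w r * Xv l (d l - cb))) = v r := fun r _ =>
    key1 v w d cb (c i) l hvl hw (fun q => hES1 q l hvl) hdl hci r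
  refine ⟨fun r hr _ => part1 r hr, ?_⟩
  set u : EVar n := some (Sum.inl (l, d l - c i)) with hu_def
  set g := substMap v w c d cb l i with hg_def
  set S : Finset (Fin n) := Finset.univ.filter (fun r : Fin n => v r ≠ 0 ∧ r ≠ l) with hS
  set T : Finset (EVar n) := S.image (fun r => (some (Sum.inl (r, d r - c i)) : EVar n)) with hT
  have hgT : ∀ var ∉ T, g var = X var := by
    intro var hvar
    rw [hg_def]
    rcases var with _ | (⟨r, k⟩ | ⟨r, k⟩)
    · rfl
    · simp only [substMap]
      rw [if_neg]
      rintro ⟨h1, h2, rfl⟩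
      refine hvar ?_
      rw [hT]
      exact Finset.mem_image.mpr ⟨r, by simp [hS, h1, h2], rfl⟩
    · rfl
  have hgmem : ∀ r, v r ≠ 0 → r ≠ l →
      g (some (Sum.inl (r, d r - c i)))
        = Dop^[cb - c i] (Yv r 0 + w r * Xv l (d l - cb)) := by
    intro r h1 h2
    rw [hg_def]
    simp only [substMap]
    rw [if_pos ⟨h1, h2, trivial⟩]
  have huT : u ∉ T := by
    rw [hT, hu_def]
    simp only [Finset.mem_image, Finset.mem_filter, Finset.mem_univ, true_and, hS]
    rintro ⟨r, ⟨h1, h2⟩, heq⟩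
    simp only [Option.some.injEq, Sum.inl.injEq, Prod.mk.injEq] at heq
    exact h2 heq.1
  have hav : ∀ j, MvPolynomial.aeval g (v j) = v j := by
    intro j
    apply aeval_fix
    intro var hvar
    rw [hg_def]
    rcases var with _ | (⟨r, k⟩ | ⟨r, k⟩)
    · rfl
    · simp only [substMap]
      rw [if_neg]
      rintro ⟨h1, h2, rfl⟩
      have hmem := le_hodX_of_mem hvar
      have h3 := lt_of_le_of_lt hmem (hES1 j r h1)
      have hcd : cb ≤ d r := hES3 r h1
      rw [show ((d r : ℤ) - (cb : ℤ) : ℤ) = (((d r - cb : ℕ)) : ℤ) from by omega,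
        WithBot.coe_lt_coe] at h3
      omega
    · rfl
  have hJl : sysJacE f c d i l = pderiv u (f i) := by
    simp only [sysJacE, hu_def]
    rw [if_pos (le_trans hci hdl)]
  have hJr : ∀ r, v r ≠ 0 →
      sysJacE f c d i r = pderiv (some (Sum.inl (r, d r - c i))) (f i) := by
    intro r h1
    simp only [sysJacE]
    rw [if_pos (le_trans hci (hES3 r h1))]
  have hcr := chainRule g T hgT u huT (f i)
  have hinj : ∀ x ∈ S, ∀ y ∈ S,
      (some (Sum.inl (x, d x - c i)) : EVar n) = some (Sum.inl (y, d y - c i)) → x = y := by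
    intro x _ y _ hxy
    simp only [Option.some.injEq, Sum.inl.injEq, Prod.mk.injEq] at hxy
    exact hxy.1
  rw [hT, Finset.sum_image hinj] at hcr
  have hterm : ∀ r ∈ S,
      v l * (MvPolynomial.aeval g (pderiv (some (Sum.inl (r, d r - c i))) (f i))
        * pderiv u (g (some (Sum.inl (r, d r - c i)))))
      = MvPolynomial.aeval g (sysJacE f c d i r) * v r := by
    intro r hr
    rw [hS] at hr
    simp only [Finset.mem_filter, Finset.mem_univ, true_and] at hr
    rw [hgmem r hr.1 hr.2, mul_left_comm, part1 r hr.1, hJr r hr.1]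
  have hker2 : ∑ j, MvPolynomial.aeval g (sysJacE f c d i j) * v j = 0 := by
    have h0 := congrArg (MvPolynomial.aeval g) hker
    rw [map_sum, map_zero] at h0
    calc ∑ j, MvPolynomial.aeval g (sysJacE f c d i j) * v j
        = ∑ j, MvPolynomial.aeval g (sysJacE f c d i j * v j) := by
          refine Finset.sum_congr rfl fun j _ => ?_
          rw [map_mul, hav j]
      _ = 0 := h0
  have hsplit : ∑ j, MvPolynomial.aeval g (sysJacE f c d i j) * v j
      = MvPolynomial.aeval g (sysJacE f c d i l) * v l
        + ∑ r ∈ S, MvPolynomial.aeval g (sysJacE f c d i r) * v r := by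
    rw [← Finset.sum_filter_add_sum_filter_not Finset.univ
      (fun r : Fin n => v r ≠ 0 ∧ r ≠ l)
      (fun j => MvPolynomial.aeval g (sysJacE f c d i j) * v j), add_comm, ← hS]
    congr 1
    apply Finset.sum_eq_single_of_mem l (by simp [hvl])
    intro b hb hbl
    simp only [Finset.mem_filter, Finset.mem_univ, true_and] at hb
    have hb0 : v b = 0 := by
      by_contra h
      exact hb ⟨h, hbl⟩
    rw [hb0, mul_zero]
  have hmain : v l * pderiv u (MvPolynomial.aeval g (f i)) = 0 := by
    rw [hcr, mul_add, Finset.mul_sum, Finset.sum_congr rfl hterm,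
      show v l * MvPolynomial.aeval g (pderiv u (f i))
          = MvPolynomial.aeval g (sysJacE f c d i l) * v l from by rw [hJl]; ring,
      ← hsplit]
    exact hker2
  rcases mul_eq_zero.mp hmain with h | h
  · exact absurd h hvl
  · exact h
end
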